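/- arXiv:1509.04950 — 5 statements merged into one kernel-verified Lean document; each statement's English description precedes it below -/
import Mathlib

section
/- Fix an odd integer n ≥ 3, set n* = (n+1)/2 and S = {1, …, n*}. Let T be a triangle of odd perimeter bounded by n (a 3-point R_{n*}-metric space whose three nonzero distances have odd sum ≤ n), and let (X,δ) be a path extension of T over S (with respect to the truncated addition r ⊕ s = min(n*, r + s)). Then for every R_{n*}-metric space A omitting triangles of odd perimeter bounded by n, there is no weak homomorphism from (X,δ) to A. That is, the class of triangles of odd perimeter bounded by n is closed under path extensions over S. -/
/-- An `R_N`-metric: a ℕ-valued metric all of whose values are at most `N`. -/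
def IsTruncMetric (N : ℕ) {α : Type*} (d : α → α → ℕ) : Prop :=
  (∀ a b, d a b ≤ N) ∧ (∀ a b, d a b = 0 ↔ a = b) ∧ (∀ a b, d a b = d b a) ∧
  (∀ a b c, d a c ≤ d a b + d b c)

/-- `d` omits triangles of odd perimeter bounded by `n`. -/
def OmitsOddTriangles (n : ℕ) {α : Type*} (d : α → α → ℕ) : Prop :=
  ∀ a b c : α, a ≠ b → b ≠ c → a ≠ c →
    d a b + d b c + d c a ≤ n → ¬ Odd (d a b + d b c + d c a)

/-- The `+_N`-sum (addition truncated at `N`) of the values of a partial function `δ`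
along consecutive pairs of a list. -/
def listDeltaSumTrunc (N : ℕ) {X : Type*} (δ : X → X → Option ℕ) :
    List X → Option ℕ
  | [] => none
  | [_] => some 0
  | a :: b :: l =>
      (δ a b).bind fun r => (listDeltaSumTrunc N δ (b :: l)).map fun s => min N (r + s)

/-- `(X, δ)` (presented by an injection `j : Y → X`) is a path extension of the
`R_N`-metric space `(Y, dY)` over `S`, with respect to addition truncated at `N`. -/
def IsPathExtensionOverTrunc (N : ℕ) {Y X : Type*} (dY : Y → Y → ℕ) (S : Finset ℕ)
    (j : Y → X) (δ : X → X → Option ℕ) : Prop :=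
  Function.Injective j ∧
  (∀ x, δ x x = some 0) ∧ (∀ x y, δ x y = δ y x) ∧
  (∀ y y' r, δ (j y) (j y') = some r → r = dY y y') ∧
  (∀ x y r, δ x y = some r → r ≠ 0 → r ∈ S) ∧
  ∃ path : Y → Y → List X,
    (∀ y y', δ (j y) (j y') = none →
      (path y y').head? = some (j y) ∧ (path y y').getLast? = some (j y') ∧
      listDeltaSumTrunc N δ (path y y') = some (dY y y')) ∧
    (∀ x : X, (∃ y, j y = x) ∨ ∃ y y', δ (j y) (j y') = none ∧ x ∈ path y y')

/-- plain sum of `d` along consecutive pairs of a list -/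
def chainSumAux {α : Type*} (d : α → α → ℕ) : List α → ℕ
  | [] => 0
  | [_] => 0
  | a :: b :: l => d a b + chainSumAux d (b :: l)

/-- chain triangle inequality -/
lemma chainLeAux {α : Type*} (d : α → α → ℕ)
    (htri : ∀ a b c, d a c ≤ d a b + d b c) :
    ∀ (l : List α) (a c : α),
      d a c ≤ chainSumAux d (a :: l) + d ((a :: l).getLast (List.cons_ne_nil _ _)) c := by
  intro l
  induction l with
  | nil => intro a c; simp [chainSumAux]
  | cons b l' ih =>
    intro a c
    have h1 : d a c ≤ d a b + d b c := htri a b c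
    have h2 := ih b c
    have hl : ((a :: b :: l').getLast (List.cons_ne_nil _ _))
        = ((b :: l').getLast (List.cons_ne_nil _ _)) := by
      simp [List.getLast_cons]
    rw [hl]
    simp only [chainSumAux]
    omega

/-- parity of triangles: any triangle of perimeter ≤ n is even -/
lemma evenTriAux {α : Type*} (n : ℕ) (d : α → α → ℕ)
    (heq0 : ∀ a b, d a b = 0 ↔ a = b) (hsym : ∀ a b, d a b = d b a)
    (hfree : OmitsOddTriangles n d) (a b c : α)
    (hle : d a b + d b c + d c a ≤ n) : Even (d a b + d b c + d c a) := by
  rw [Nat.even_iff]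
  by_cases hab : a = b
  · subst hab
    have h0 : d a a = 0 := (heq0 a a).mpr rfl
    have := hsym a c
    omega
  by_cases hbc : b = c
  · subst hbc
    have h0 : d b b = 0 := (heq0 b b).mpr rfl
    have := hsym a b
    omega
  by_cases hac : a = c
  · subst hac
    have h0 : d a a = 0 := (heq0 a a).mpr rfl
    have := hsym a b
    omega
  · have := Nat.not_odd_iff_even.mp (hfree a b c hab hbc hac hle)
    rw [Nat.even_iff] at this
    omega

/-- chain parity lemma -/
lemma chainEvenAux {α : Type*} (n : ℕ) (d : α → α → ℕ)
    (heq0 : ∀ a b, d a b = 0 ↔ a = b) (hsym : ∀ a b, d a b = d b a)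
    (htri : ∀ a b c, d a c ≤ d a b + d b c)
    (hfree : OmitsOddTriangles n d) :
    ∀ (l : List α) (a c : α),
      chainSumAux d (a :: l) + d a c + d ((a :: l).getLast (List.cons_ne_nil _ _)) c ≤ n →
      Even (chainSumAux d (a :: l) + d a c + d ((a :: l).getLast (List.cons_ne_nil _ _)) c) := by
  intro l
  induction l with
  | nil =>
    intro a c _
    simp only [chainSumAux, List.getLast_singleton, Nat.even_iff]
    omega
  | cons b l' ih =>
    intro a c hle
    have hl : ((a :: b :: l').getLast (List.cons_ne_nil _ _))
        = ((b :: l').getLast (List.cons_ne_nil _ _)) := by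
      simp [List.getLast_cons]
    rw [hl] at hle ⊢
    simp only [chainSumAux] at hle ⊢
    have h1 : d b c ≤ d a b + d a c := by
      have := htri b a c; have := hsym a b; omega
    have h2 : d b c ≤ chainSumAux d (b :: l')
        + d ((b :: l').getLast (List.cons_ne_nil _ _)) c := chainLeAux d htri l' b c
    have h3 : Even (chainSumAux d (b :: l') + d b c
        + d ((b :: l').getLast (List.cons_ne_nil _ _)) c) := ih b c (by omega)
    have h4 : Even (d a b + d b c + d c a) :=
      evenTriAux n d heq0 hsym hfree a b c (by have := hsym a c; omega)
    have := hsym a c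
    rw [Nat.even_iff] at h3 h4 ⊢
    omega
/-- If the truncated sum is `some s` with `s < N`, the mapped plain chain sum equals `s`. -/
lemma truncExactAux {X α : Type*} (N : ℕ) (δ : X → X → Option ℕ) (dA : α → α → ℕ)
    (f : X → α) (hf : ∀ x y r, δ x y = some r → dA (f x) (f y) = r) :
    ∀ (L : List X) (s : ℕ), listDeltaSumTrunc N δ L = some s → s < N →
      chainSumAux dA (L.map f) = s := by
  intro L
  induction L with
  | nil => intro s hs; simp [listDeltaSumTrunc] at hs
  | cons a L ih =>
    intro s hs hlt
    match L, hs with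
    | [], hs =>
      simp only [listDeltaSumTrunc, Option.some.injEq] at hs
      simp only [List.map, chainSumAux]
      omega
    | b :: l, hs =>
      simp only [listDeltaSumTrunc, Option.bind_eq_some_iff, Option.map_eq_some_iff] at hs
      obtain ⟨r, hr, s', hs', hmin⟩ := hs
      have hr' : dA (f a) (f b) = r := hf a b r hr
      have h1 : r + s' = s := by omega
      have h2 : s' < N := by omega
      have := ih s' hs' h2
      simp only [List.map, chainSumAux] at this ⊢
      omega
/-- The class of triangles of odd perimeter bounded by `n` is closed under path
extensions over `S = {1, …, n*}`: no path extension of such a triangle over `S`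
admits a weak homomorphism into an `R_{n*}`-metric space omitting triangles of odd
perimeter bounded by `n`. -/
theorem oddTriangles_closed_under_pathExtensions (n : ℕ) (hn : 3 ≤ n) (hodd : Odd n)
    (dT : Fin 3 → Fin 3 → ℕ) (hT : IsTruncMetric ((n + 1) / 2) dT)
    (hTodd : Odd (dT 0 1 + dT 1 2 + dT 2 0))
    (hTbd : dT 0 1 + dT 1 2 + dT 2 0 ≤ n)
    {X : Type*} (j : Fin 3 → X) (δ : X → X → Option ℕ)
    (hpe : IsPathExtensionOverTrunc ((n + 1) / 2) dT (Finset.Icc 1 ((n + 1) / 2)) j δ)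
    {α : Type*} (dA : α → α → ℕ) (hA : IsTruncMetric ((n + 1) / 2) dA)
    (hAfree : OmitsOddTriangles n dA) :
    ¬ ∃ f : X → α, ∀ x y r, δ x y = some r → dA (f x) (f y) = r := by
  rintro ⟨f, hf⟩
  obtain ⟨hAbd, hAeq, hAsym, hAtri⟩ := hA
  obtain ⟨hTbd', hTeq, hTsym, hTtri⟩ := hT
  obtain ⟨hjinj, hδrefl, hδsym, hδagree, hδS, path, hpath, hcover⟩ := hpe
  set N := (n + 1) / 2 with hN
  have hn2 : 2 * N = n + 1 := by
    obtain ⟨k, hk⟩ := hodd; omega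
  have hlt01 : dT 0 1 < N := by
    have := hTtri 0 2 1; have := hTsym 0 2; have := hTsym 2 1; omega
  have hlt12 : dT 1 2 < N := by
    have := hTtri 1 0 2; have := hTsym 1 0; have := hTsym 0 2; omega
  have hlt20 : dT 2 0 < N := by
    have := hTtri 2 1 0; have := hTsym 2 1; have := hTsym 1 0; omega
  have edge : ∀ y y' : Fin 3, dT y y' < N →
      dA (f (j y)) (f (j y')) ≤ dT y y' ∧
      ∀ c : α, dT y y' + dA (f (j y)) c + dA (f (j y')) c ≤ n →
        Even (dT y y' + dA (f (j y)) c + dA (f (j y')) c) := by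
    intro y y' hlt
    cases hδ : δ (j y) (j y') with
    | some r =>
      have hr : r = dT y y' := hδagree y y' r hδ
      have hq : dA (f (j y)) (f (j y')) = r := hf _ _ r hδ
      refine ⟨by omega, fun c hle => ?_⟩
      have h4 : Even (dA (f (j y)) (f (j y')) + dA (f (j y')) c + dA c (f (j y))) :=
        evenTriAux n dA hAeq hAsym hAfree _ _ _
          (by have := hAsym (f (j y)) c; omega)
      have := hAsym (f (j y)) c
      rw [Nat.even_iff] at h4 ⊢
      omega
    | none =>
      obtain ⟨hhead, hlast, hsum⟩ := hpath y y' hδ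
      obtain ⟨x0, L, hP⟩ : ∃ x0 L, path y y' = x0 :: L := by
        cases hPn : path y y' with
        | nil => rw [hPn] at hhead; simp at hhead
        | cons x0 L => exact ⟨x0, L, rfl⟩
      rw [hP] at hhead hlast hsum
      have hx0 : x0 = j y := by simpa using hhead
      have hlast' : (f x0 :: L.map f).getLast (List.cons_ne_nil _ _) = f (j y') := by
        have h1 : ((x0 :: L).map f).getLast? = some (f (j y')) := by
          rw [List.getLast?_map, hlast]; rfl
        have h2 : ((x0 :: L).map f).getLast? =
            some (((x0 :: L).map f).getLast (by simp)) :=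
          List.getLast?_eq_getLast _
        rw [h2] at h1
        simpa using h1
      have hcs : chainSumAux dA ((x0 :: L).map f) = dT y y' :=
        truncExactAux N δ dA f hf _ _ hsum hlt
      have hcs' : chainSumAux dA (f x0 :: L.map f) = dT y y' := hcs
      constructor
      · have h1 := chainLeAux dA hAtri (L.map f) (f x0) (f (j y'))
        rw [hlast'] at h1
        have h0 : dA (f (j y')) (f (j y')) = 0 := (hAeq _ _).mpr rfl
        rw [hx0] at h1 hcs'
        omega
      · intro c hle
        have h1 := chainEvenAux n dA hAeq hAsym hAtri hAfree (L.map f) (f x0) c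
        rw [hlast', hcs'] at h1
        rw [hx0] at h1
        exact h1 hle
  obtain ⟨hq01, E01⟩ := edge 0 1 hlt01
  obtain ⟨hq12, E12⟩ := edge 1 2 hlt12
  obtain ⟨hq20, E20⟩ := edge 2 0 hlt20
  have s02 := hAsym (f (j 0)) (f (j 2))
  have s01 := hAsym (f (j 0)) (f (j 1))
  have s12 := hAsym (f (j 1)) (f (j 2))
  have E1 := E01 (f (j 2)) (by omega)
  have E2 := E12 (f (j 0)) (by omega)
  have E3 := E20 (f (j 1)) (by omega)
  rw [Nat.even_iff] at E1 E2 E3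
  rw [Nat.odd_iff] at hTodd
  omega
end

section
/- Fix an odd integer n ≥ 3 and set n* = (n+1)/2. Let A be an R_{n*}-metric space omitting triangles of odd perimeter bounded by n. Then for every m ≥ 3 and every sequence x₁, …, x_m of (not necessarily distinct) points of A, if p = d(x₁,x₂) + d(x₂,x₃) + ⋯ + d(x_{m−1},x_m) + d(x_m,x₁) (ordinary sum in ℕ) satisfies p ≤ n, then p is even. -/
private lemma tri_even {n : ℕ} {α : Type*} {d : α → α → ℕ}
    (hA : IsTruncMetric ((n + 1) / 2) d) (hAfree : OmitsOddTriangles n d)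
    (a b c : α) (h : d a b + d b c + d c a ≤ n) :
    Even (d a b + d b c + d c a) := by
  obtain ⟨hbd, heq, hsym, htri⟩ := hA
  by_cases hab : a = b
  · subst hab
    have h0 : d a a = 0 := (heq a a).mpr rfl
    have hs : d c a = d a c := hsym c a
    exact ⟨d a c, by omega⟩
  by_cases hbc : b = c
  · subst hbc
    have h0 : d b b = 0 := (heq b b).mpr rfl
    have hs : d b a = d a b := hsym b a
    exact ⟨d a b, by omega⟩
  by_cases hac : a = c
  · subst hac
    have h0 : d a a = 0 := (heq a a).mpr rfl
    have hs : d b a = d a b := hsym b a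
    exact ⟨d a b, by omega⟩
  exact Nat.not_odd_iff_even.mp (hAfree a b c hab hbc hac h)

private lemma sum_rot (m j : ℕ) (hj : j < m) (g : ℕ → ℕ) :
    ∑ i ∈ Finset.range m, g ((i + j) % m) = ∑ i ∈ Finset.range m, g i := by
  refine Finset.sum_nbij' (fun i => (i + j) % m) (fun i => (i + (m - j)) % m)
    ?_ ?_ ?_ ?_ ?_
  · intro a _; exact Finset.mem_range.mpr (Nat.mod_lt _ (by omega))
  · intro a _; exact Finset.mem_range.mpr (Nat.mod_lt _ (by omega))
  · intro a ha
    have ha' := Finset.mem_range.mp ha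
    show ((a + j) % m + (m - j)) % m = a
    rw [Nat.mod_add_mod, show a + j + (m - j) = a + m from by omega,
      Nat.add_mod_right, Nat.mod_eq_of_lt ha']
  · intro a ha
    have ha' := Finset.mem_range.mp ha
    show ((a + (m - j)) % m + j) % m = a
    rw [Nat.mod_add_mod, show a + (m - j) + j = a + m from by omega,
      Nat.add_mod_right, Nat.mod_eq_of_lt ha']
  · intro a _; rfl

private lemma main_lemma {n : ℕ} (hn : 3 ≤ n) (hodd : Odd n)
    {α : Type*} {d : α → α → ℕ} (hA : IsTruncMetric ((n + 1) / 2) d)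
    (hAfree : OmitsOddTriangles n d) :
    ∀ m, 3 ≤ m → ∀ x : ℕ → α,
      (∑ i ∈ Finset.range m, d (x i) (x ((i + 1) % m))) ≤ n →
      Even (∑ i ∈ Finset.range m, d (x i) (x ((i + 1) % m))) := by
  intro m hm
  induction m, hm using Nat.le_induction with
  | base =>
    intro x hp
    have h3 : (∑ i ∈ Finset.range 3, d (x i) (x ((i + 1) % 3)))
        = d (x 0) (x 1) + d (x 1) (x 2) + d (x 2) (x 0) := by
      simp [Finset.sum_range_succ]
    rw [h3] at hp ⊢
    exact tri_even hA hAfree _ _ _ hp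
  | succ m hm3 ih =>
    intro x hp
    set M := m + 1 with hM
    -- the cyclic edge lengths
    set e : ℕ → ℕ := fun i => d (x i) (x ((i + 1) % M)) with he
    -- pigeonhole: some vertex has small adjacent edge sum
    have key : ∃ j, j < M ∧ e j + e ((j + 1) % M) ≤ (n - 1) / 2 := by
      by_contra hcon
      push_neg at hcon
      have hsum : ∑ i ∈ Finset.range M, (e i + e ((i + 1) % M))
          = 2 * ∑ i ∈ Finset.range M, e i := by
        rw [Finset.sum_add_distrib, sum_rot M 1 (by omega) e]
        ring
      have hge : ∀ i ∈ Finset.range M, (n + 1) / 2 ≤ e i + e ((i + 1) % M) := by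
        intro i hi
        have := hcon i (Finset.mem_range.mp hi)
        obtain ⟨k, hk⟩ := hodd
        omega
      have hle := Finset.card_nsmul_le_sum (Finset.range M) _ _ hge
      rw [Finset.card_range, smul_eq_mul, hsum] at hle
      have hp' : ∑ i ∈ Finset.range M, e i ≤ n := hp
      have h4 : 4 * ((n + 1) / 2) ≤ M * ((n + 1) / 2) :=
        Nat.mul_le_mul_right _ (by omega)
      obtain ⟨k, hk⟩ := hodd
      omega
    obtain ⟨j, hjM, hj⟩ := key
    -- rotate the cycle so that the chosen vertex sits at position 1
    set y : ℕ → α := fun i => x ((i + j) % M) with hy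
    set E : ℕ → ℕ := fun i => d (y i) (y ((i + 1) % M)) with hE
    have hEe : ∀ i, E i = e ((i + j) % M) := by
      intro i
      have h1 : ((i + 1) % M + j) % M = ((i + j) % M + 1) % M := by
        rw [Nat.mod_add_mod, Nat.mod_add_mod]
        ring_nf
      simp only [hE, hy, he, h1]
    have hSy : ∑ i ∈ Finset.range M, E i = ∑ i ∈ Finset.range M, e i := by
      calc ∑ i ∈ Finset.range M, E i
          = ∑ i ∈ Finset.range M, e ((i + j) % M) :=
            Finset.sum_congr rfl (fun i _ => hEe i)
        _ = ∑ i ∈ Finset.range M, e i := sum_rot M j hjM e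
    -- the two small adjacent edges of y
    have hE0 : E 0 = e j := by
      have := hEe 0
      rwa [Nat.zero_add, Nat.mod_eq_of_lt hjM] at this
    have hE1 : E 1 = e ((j + 1) % M) := by
      have := hEe 1
      rwa [show 1 + j = j + 1 from by omega] at this
    have hsmall : E 0 + E 1 ≤ (n - 1) / 2 := by rw [hE0, hE1]; exact hj
    obtain ⟨hbd, heq, hsym, htri⟩ := hA
    -- the shortcut cycle z, skipping vertex y 1
    set z : ℕ → α := fun i => if i = 0 then y 0 else y (i + 1) with hz
    set F : ℕ → ℕ := fun i => d (z i) (z ((i + 1) % m)) with hF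
    have hz0 : z 0 = y 0 := by simp [hz]
    have hzs : ∀ i : ℕ, z (i + 1) = y (i + 2) := by intro i; simp [hz]
    -- explicit values of E at small indices
    have hE0' : E 0 = d (y 0) (y 1) := by
      simp only [hE]
      rw [Nat.zero_add, Nat.mod_eq_of_lt (by omega)]
    have hE1' : E 1 = d (y 1) (y 2) := by
      simp only [hE]
      rw [Nat.mod_eq_of_lt (by omega)]
    -- decompose the perimeter of y
    have hT : ∑ i ∈ Finset.range M, E i
        = (∑ i ∈ Finset.range (m - 1), E (i + 2)) + E 1 + E 0 := by
      rw [show M = (m - 1) + 1 + 1 from by omega, Finset.sum_range_succ',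
        Finset.sum_range_succ']
    -- decompose the perimeter of z
    have hZ : ∑ i ∈ Finset.range m, F i
        = (∑ i ∈ Finset.range (m - 1), E (i + 2)) + d (y 0) (y 2) := by
      rw [show m = (m - 1) + 1 from by omega, Finset.sum_range_succ']
      congr 1
      · refine Finset.sum_congr rfl (fun i hi => ?_)
        have hi' := Finset.mem_range.mp hi
        show d (z (i + 1)) (z ((i + 1 + 1) % m)) = d (y (i + 2)) (y ((i + 2 + 1) % M))
        by_cases hcase : i + 2 < m
        · rw [Nat.mod_eq_of_lt (by omega : i + 1 + 1 < m)]
          rw [Nat.mod_eq_of_lt (by omega : i + 2 + 1 < M)]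
          rw [hzs i, show i + 1 + 1 = (i + 1) + 1 from rfl, hzs (i + 1)]
        · rw [show (i + 1 + 1) % m = 0 from by
            rw [show i + 1 + 1 = m from by omega]; exact Nat.mod_self m]
          rw [show (i + 2 + 1) % M = 0 from by
            rw [show i + 2 + 1 = M from by omega]; exact Nat.mod_self M]
          rw [hzs i, hz0]
      · show d (z 0) (z ((0 + 1) % m)) = d (y 0) (y 2)
        rw [Nat.mod_eq_of_lt (by omega : 0 + 1 < m), hz0,
          show (0 : ℕ) + 1 = 0 + 1 from rfl, hzs 0]
    -- triangle y0 y1 y2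
    have hCB : d (y 0) (y 2) ≤ (n + 1) / 2 := hbd _ _
    have htriangle : d (y 0) (y 2) ≤ E 0 + E 1 := by
      rw [hE0', hE1']; exact htri _ _ _
    have htle : d (y 0) (y 1) + d (y 1) (y 2) + d (y 2) (y 0) ≤ n := by
      have hs : d (y 2) (y 0) = d (y 0) (y 2) := hsym _ _
      obtain ⟨k, hk⟩ := hodd
      omega
    have htev : Even (d (y 0) (y 1) + d (y 1) (y 2) + d (y 2) (y 0)) :=
      tri_even ⟨hbd, heq, hsym, htri⟩ hAfree _ _ _ htle
    -- the x-perimeter equals the y-perimeter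
    have hpy : ∑ i ∈ Finset.range M, E i ≤ n := by rw [hSy]; exact hp
    -- perimeter of z is at most n
    have hpz : ∑ i ∈ Finset.range m, F i ≤ n := by
      rw [hZ]
      calc (∑ i ∈ Finset.range (m - 1), E (i + 2)) + d (y 0) (y 2)
          ≤ (∑ i ∈ Finset.range (m - 1), E (i + 2)) + E 1 + E 0 := by omega
        _ = ∑ i ∈ Finset.range M, E i := hT.symm
        _ ≤ n := hpy
    have hzev : Even (∑ i ∈ Finset.range m, F i) := ih z hpz
    -- assemble parity
    have hgoal : Even (∑ i ∈ Finset.range M, E i) := by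
      obtain ⟨u, hu⟩ := htev
      obtain ⟨v, hv⟩ := hzev
      have hs : d (y 2) (y 0) = d (y 0) (y 2) := hsym _ _
      refine ⟨u + v - d (y 0) (y 2), ?_⟩
      rw [hT] at *
      rw [hZ] at hv
      omega
    rw [← hSy]
    exact hgoal

/-- In an `R_{n*}`-metric space omitting triangles of odd perimeter bounded by `n`
(`n ≥ 3` odd, `n* = (n+1)/2`), every cyclic sequence of `m ≥ 3` (not necessarily
distinct) points whose cyclic perimeter is at most `n` has even perimeter. -/
theorem even_cycle_perimeter (n : ℕ) (hn : 3 ≤ n) (hodd : Odd n)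
    {α : Type*} (d : α → α → ℕ) (hA : IsTruncMetric ((n + 1) / 2) d)
    (hAfree : OmitsOddTriangles n d)
    (m : ℕ) (hm : 3 ≤ m) (x : ℕ → α)
    (hp : ∑ i ∈ Finset.range m, d (x i) (x ((i + 1) % m)) ≤ n) :
    Even (∑ i ∈ Finset.range m, d (x i) (x ((i + 1) % m))) := by
  exact main_lemma hn hodd hA hAfree m hm x hp
end

section
/- Let R be an archimedean distance monoid and let S ⊆ R \ {0} be finite and nonempty. Then there exists k ∈ ℕ such that for every r₀ ∈ S, every n ≥ k, and all r₁, …, r_n ∈ S, one has r₀ ≤ r₁ ⊕ ⋯ ⊕ r_n. Consequently, the set Σ = {(r₀, r₁, …, r_n) : n > 0, each r_i ∈ S, and r₀ > r₁ ⊕ ⋯ ⊕ r_n} of finite tuples is finite. -/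
/-- Over an archimedean distance monoid, for a finite nonempty `S ⊆ R \ {0}` there is
`k` such that any `⊕`-sum of at least `k` elements of `S` dominates every element of
`S`; consequently the set `Σ` of tuples `(r₀, r₁, …, r_n)` from `S` (here encoded as
lists `r₀ :: t` with `t ≠ []`) with `r₀ > r₁ ⊕ ⋯ ⊕ r_n` is finite. -/
theorem archimedean_sums_dominate {R : Type*} [AddCommMonoid R] [LinearOrder R] [IsOrderedAddMonoid R]
    (h0 : ∀ r : R, 0 ≤ r)
    (harch : ∀ r s : R, 0 < r → 0 < s → ∃ n : ℕ, 0 < n ∧ s ≤ n • r)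
    (S : Finset R) (hSne : S.Nonempty) (hS0 : (0 : R) ∉ S) :
    (∃ k : ℕ, ∀ r₀ ∈ S, ∀ n : ℕ, k ≤ n → ∀ r : Fin n → R, (∀ i, r i ∈ S) →
      r₀ ≤ ∑ i, r i) ∧
    Set.Finite {l : List R | ∃ (r₀ : R) (t : List R), l = r₀ :: t ∧ r₀ ∈ S ∧
      t ≠ [] ∧ (∀ r ∈ t, r ∈ S) ∧ t.sum < r₀} := by
  set m := S.min' hSne with hm
  set M := S.max' hSne with hM
  have hmpos : 0 < m := (h0 m).lt_of_ne' (fun h => hS0 (h ▸ S.min'_mem hSne))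
  have hMpos : 0 < M := (h0 M).lt_of_ne' (fun h => hS0 (h ▸ S.max'_mem hSne))
  obtain ⟨k, hk0, hkM⟩ := harch m M hmpos hMpos
  have key : ∀ r₀ ∈ S, ∀ n : ℕ, k ≤ n → ∀ r : Fin n → R, (∀ i, r i ∈ S) →
      r₀ ≤ ∑ i, r i := by
    intro r₀ hr₀ n hn r hr
    have h1 : r₀ ≤ M := S.le_max' r₀ hr₀
    have h2 : (k : ℕ) • m ≤ n • m := nsmul_le_nsmul_left (h0 m) hn
    have h3 : n • m ≤ ∑ i, r i := by
      calc n • m = ∑ _i : Fin n, m := by simp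
        _ ≤ ∑ i, r i := Finset.sum_le_sum fun i _ => S.min'_le _ (hr i)
    exact h1.trans (hkM.trans (h2.trans h3))
  refine ⟨⟨k, key⟩, ?_⟩
  have hfin : Set.Finite ((List.map ((↑) : {x // x ∈ S} → R)) ''
      {l : List {x // x ∈ S} | l.length ≤ k + 1}) :=
    (List.finite_length_le _ (k + 1)).image _
  refine hfin.subset ?_
  rintro l ⟨r₀, t, rfl, hr₀, htne, ht, hsum⟩
  have hlen : t.length < k := by
    by_contra hlen
    push_neg at hlen
    have := key r₀ hr₀ t.length hlen (fun i => t.get i) (fun i => ht _ (t.get_mem i))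
    rw [show (∑ i, t.get i) = t.sum from Fin.sum_univ_getElem t] at this
    exact absurd hsum this.not_gt
  have hmem : ∀ x ∈ r₀ :: t, x ∈ S := by
    intro x hx
    rcases List.mem_cons.mp hx with h | h
    · exact h ▸ hr₀
    · exact ht _ h
  refine ⟨(r₀ :: t).attach.map (fun x => ⟨x.1, hmem _ x.2⟩), ?_, ?_⟩
  · simp only [Set.mem_setOf_eq, List.length_map, List.length_attach, List.length_cons]
    omega
  · simp [List.map_map, Function.comp]
end

section
/- Let R be a semi-archimedean distance monoid and (A,d) an R-metric space. Suppose a, a', b, b' ∈ A are such that for every integer k > 0: k·d(a,a') < d(a,b), k·d(b,b') < d(a,b), k·d(a,a') < d(a',b'), and k·d(b,b') < d(a',b') (where k·r denotes the k-fold sum r ⊕ ⋯ ⊕ r). Then d(a,b) = d(a',b'). -/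
/-- A generalized metric over a distance monoid `R`. -/
def IsGenMetric {R : Type*} [AddCommMonoid R] [LinearOrder R] [IsOrderedAddMonoid R] {α : Type*}
    (d : α → α → R) : Prop :=
  (∀ a b, d a b = 0 ↔ a = b) ∧ (∀ a b, d a b = d b a) ∧
  (∀ a b c, d a c ≤ d a b + d b c)

/-- In a metric space over a semi-archimedean distance monoid, if `d a a'` and
`d b b'` are infinitesimal with respect to both `d a b` and `d a' b'`, then
`d a b = d a' b'`. -/
theorem semiArchimedean_distance_eq {R : Type*} [AddCommMonoid R] [LinearOrder R] [IsOrderedAddMonoid R]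
    (h0 : ∀ r : R, 0 ≤ r)
    (hsemi : ∀ r s : R, 0 < r → 0 < s → (∀ n : ℕ, 0 < n → n • r < s) → r + s = s)
    {α : Type*} (d : α → α → R) (hmet : IsGenMetric d)
    (a a' b b' : α)
    (h1 : ∀ k : ℕ, 0 < k → k • d a a' < d a b)
    (h2 : ∀ k : ℕ, 0 < k → k • d b b' < d a b)
    (h3 : ∀ k : ℕ, 0 < k → k • d a a' < d a' b')
    (h4 : ∀ k : ℕ, 0 < k → k • d b b' < d a' b') :
    d a b = d a' b' := by
  obtain ⟨hzero, hsym, htri⟩ := hmet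
  have absorb : ∀ r s : R, (∀ n : ℕ, 0 < n → n • r < s) → r + s = s := by
    intro r s h
    rcases (h0 r).lt_or_eq with hr | hr
    · have hs : 0 < s := lt_of_le_of_lt (h0 r) (by simpa using h 1 one_pos)
      exact hsemi r s hr hs h
    · rw [← hr, zero_add]
  have key : ∀ x y : R, (∀ n : ℕ, 0 < n → n • d a a' < x) →
      (∀ n : ℕ, 0 < n → n • d b b' < x) → y ≤ d a a' + x + d b b' → y ≤ x := by
    intro x y hx hy hle
    have e1 : d b b' + x = x := absorb _ _ hy
    have e2 : d a a' + x = x := absorb _ _ hx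
    calc y ≤ d a a' + x + d b b' := hle
      _ = d a a' + (d b b' + x) := by abel
      _ = d a a' + x := by rw [e1]
      _ = x := e2
  have le1 : d a b ≤ d a' b' := by
    refine key _ _ h3 h4 ?_
    calc d a b ≤ d a a' + d a' b := htri a a' b
      _ ≤ d a a' + (d a' b' + d b' b) := by
          exact add_le_add_right (htri a' b' b) _
      _ = d a a' + d a' b' + d b b' := by rw [hsym b' b]; abel
  have le2 : d a' b' ≤ d a b := by
    refine key _ _ h1 h2 ?_
    calc d a' b' ≤ d a' a + d a b' := htri a' a b'
      _ ≤ d a' a + (d a b + d b b') := by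
          exact add_le_add_right (htri a b b') _
      _ = d a a' + d a b + d b b' := by rw [hsym a' a]; abel
  exact le_antisymm le1 le2
end

section
/- Fix an odd integer n ≥ 3 and set n* = (n+1)/2. Let (A, d_A) and (B, d_B) be finite R_{n*}-metric spaces, each omitting triangles of odd perimeter bounded by n, with A ∩ B nonempty and d_A = d_B on (A ∩ B) × (A ∩ B). Define d_C on C = A ∪ B by: d_C(x,y) = d_A(x,y) if x,y ∈ A; d_C(x,y) = d_B(x,y) if x,y ∈ B; and d_C(x,y) = d_C(y,x) = min_{z ∈ A∩B} min(n*, d_A(x,z) + d_B(z,y)) if x ∈ A \ B and y ∈ B \ A. Then (C, d_C) is an R_{n*}-metric space omitting triangles of odd perimeter bounded by n. -/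
/-- The `R_N`-metric axioms for `d`, restricted to a subset `A`. -/
def IsTruncMetricOn (N : ℕ) {γ : Type*} (A : Set γ) (d : γ → γ → ℕ) : Prop :=
  (∀ a ∈ A, ∀ b ∈ A, d a b ≤ N) ∧ (∀ a ∈ A, ∀ b ∈ A, (d a b = 0 ↔ a = b)) ∧
  (∀ a ∈ A, ∀ b ∈ A, d a b = d b a) ∧
  (∀ a ∈ A, ∀ b ∈ A, ∀ c ∈ A, d a c ≤ d a b + d b c)

/-- `d` omits triangles of odd perimeter bounded by `n`, restricted to a subset `A`. -/
def OmitsOddTrianglesOn (n : ℕ) {γ : Type*} (A : Set γ) (d : γ → γ → ℕ) : Prop :=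
  ∀ a ∈ A, ∀ b ∈ A, ∀ c ∈ A, a ≠ b → b ≠ c → a ≠ c →
    d a b + d b c + d c a ≤ n → ¬ Odd (d a b + d b c + d c a)

/-- Any (possibly degenerate) triangle of perimeter at most `n` in a space omitting
odd triangles of perimeter at most `n` has even perimeter. -/
lemma evenTri {γ : Type*} (n : ℕ) (A : Set γ) (d : γ → γ → ℕ)
    (hsymm : ∀ x ∈ A, ∀ y ∈ A, d x y = d y x) (hzero : ∀ x ∈ A, d x x = 0)
    (hfree : OmitsOddTrianglesOn n A d) :
    ∀ x ∈ A, ∀ y ∈ A, ∀ z ∈ A, d x y + d y z + d z x ≤ n → (d x y + d y z + d z x) % 2 = 0 := by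
  intro x hx y hy z hz hle
  by_cases hxy : x = y
  · subst hxy
    have h0 := hzero x hx
    have hs := hsymm x hx z hz
    omega
  by_cases hyz : y = z
  · subst hyz
    have h0 := hzero y hy
    have hs := hsymm x hx y hy
    omega
  by_cases hxz : x = z
  · subst hxz
    have h0 := hzero x hx
    have hs := hsymm x hx y hy
    omega
  · have h := hfree x hx y hy z hz hxy hyz hxz hle
    rw [Nat.odd_iff] at h
    omega

/-- The key parity computation: if `a, b ∈ A`, `c ∈ B`, and the cross distances are
realized through points `z1, z2` of the intersection, the perimeter is even. -/
lemma parity_key {γ : Type*} (n : ℕ) (A B : Set γ) (dA dB : γ → γ → ℕ)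
    (hAsymm : ∀ x ∈ A, ∀ y ∈ A, dA x y = dA y x)
    (hAzero : ∀ x ∈ A, dA x x = 0)
    (hAtri : ∀ x ∈ A, ∀ y ∈ A, ∀ z ∈ A, dA x z ≤ dA x y + dA y z)
    (hBsymm : ∀ x ∈ B, ∀ y ∈ B, dB x y = dB y x)
    (hBzero : ∀ x ∈ B, dB x x = 0)
    (hBtri : ∀ x ∈ B, ∀ y ∈ B, ∀ z ∈ B, dB x z ≤ dB x y + dB y z)
    (hAfree : OmitsOddTrianglesOn n A dA) (hBfree : OmitsOddTrianglesOn n B dB)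
    (hagree : ∀ x ∈ A, x ∈ B → ∀ y ∈ A, y ∈ B → dA x y = dB x y)
    {a b c z1 z2 : γ} (ha : a ∈ A) (hb : b ∈ A) (hc : c ∈ B)
    (h1A : z1 ∈ A) (h1B : z1 ∈ B) (h2A : z2 ∈ A) (h2B : z2 ∈ B)
    (hle : dA a b + (dA b z2 + dB z2 c) + (dA a z1 + dB z1 c) ≤ n) :
    ¬ Odd (dA a b + (dA b z2 + dB z2 c) + (dA a z1 + dB z1 c)) := by
  intro hodd
  have hδ : dA z1 z2 = dB z1 z2 := hagree z1 h1A h1B z2 h2A h2B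
  have sB1 : dB c z1 = dB z1 c := hBsymm c hc z1 h1B
  have sB2 : dB c z2 = dB z2 c := hBsymm c hc z2 h2B
  have sA1 : dA z1 a = dA a z1 := hAsymm z1 h1A a ha
  have sA2 : dA z2 a = dA a z2 := hAsymm z2 h2A a ha
  have bd1 : dB z1 z2 ≤ dB z1 c + dB c z2 := hBtri z1 h1B c hc z2 h2B
  have bd2a : dA z1 z2 ≤ dA z1 a + dA a z2 := hAtri z1 h1A a ha z2 h2A
  have bd2b : dA a z2 ≤ dA a b + dA b z2 := hAtri a ha b hb z2 h2A
  have bd3 : dA a z2 ≤ dA a z1 + dA z1 z2 := hAtri a ha z1 h1A z2 h2A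
  have hT2 : (dA a b + dA b z2 + dA z2 a) % 2 = 0 :=
    evenTri n A dA hAsymm hAzero hAfree a ha b hb z2 h2A (by omega)
  have hT3 : (dB z1 z2 + dB z2 c + dB c z1) % 2 = 0 :=
    evenTri n B dB hBsymm hBzero hBfree z1 h1B z2 h2B c hc (by omega)
  have hT4 : (dA a z1 + dA z1 z2 + dA z2 a) % 2 = 0 :=
    evenTri n A dA hAsymm hAzero hAfree a ha z1 h1A z2 h2A (by omega)
  rw [Nat.odd_iff] at hodd
  omega

/-- For odd `n ≥ 3` and `n* = (n+1)/2`, the free amalgamation of two finite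
`R_{n*}`-metric spaces omitting triangles of odd perimeter bounded by `n` over their
nonempty intersection (with cross distances
`min_{z ∈ A ∩ B} min(n*, d_A x z + d_B z y)`) is again an `R_{n*}`-metric space
omitting triangles of odd perimeter bounded by `n`. -/
theorem free_amalgamation_oddTriangleFree (n : ℕ) (hn : 3 ≤ n) (hodd : Odd n)
    {γ : Type*} [DecidableEq γ] (A B : Finset γ) (hcover : ∀ x : γ, x ∈ A ∨ x ∈ B)
    (hne : (A ∩ B).Nonempty)
    (dA dB : γ → γ → ℕ)
    (hA : IsTruncMetricOn ((n + 1) / 2) (A : Set γ) dA)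
    (hB : IsTruncMetricOn ((n + 1) / 2) (B : Set γ) dB)
    (hAfree : OmitsOddTrianglesOn n (A : Set γ) dA)
    (hBfree : OmitsOddTrianglesOn n (B : Set γ) dB)
    (hagree : ∀ x ∈ A ∩ B, ∀ y ∈ A ∩ B, dA x y = dB x y)
    (dC : γ → γ → ℕ)
    (hCA : ∀ x ∈ A, ∀ y ∈ A, dC x y = dA x y)
    (hCB : ∀ x ∈ B, ∀ y ∈ B, dC x y = dB x y)
    (hCross : ∀ x ∈ A, x ∉ B → ∀ y ∈ B, y ∉ A →
      dC x y = (A ∩ B).inf' hne (fun z => min ((n + 1) / 2) (dA x z + dB z y)) ∧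
      dC y x = (A ∩ B).inf' hne (fun z => min ((n + 1) / 2) (dA x z + dB z y))) :
    IsTruncMetric ((n + 1) / 2) dC ∧ OmitsOddTriangles n dC := by
  obtain ⟨hAbd, hAzeroIff, hAsymm, hAtri⟩ := hA
  obtain ⟨hBbd, hBzeroIff, hBsymm, hBtri⟩ := hB
  have h2N : n + 1 = 2 * ((n + 1) / 2) := by
    obtain ⟨k, hk⟩ := hodd; omega
  have hNge : 2 ≤ (n + 1) / 2 := by omega
  have hAzero : ∀ x ∈ (A : Set γ), dA x x = 0 := fun x hx => (hAzeroIff x hx x hx).mpr rfl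
  have hBzero : ∀ x ∈ (B : Set γ), dB x x = 0 := fun x hx => (hBzeroIff x hx x hx).mpr rfl
  have hagree' : ∀ x ∈ (A : Set γ), x ∈ (B : Set γ) → ∀ y ∈ (A : Set γ), y ∈ (B : Set γ) →
      dA x y = dB x y := by
    intro x hxA hxB y hyA hyB
    exact hagree x (Finset.mem_inter.mpr ⟨hxA, hxB⟩) y (Finset.mem_inter.mpr ⟨hyA, hyB⟩)
  -- The cross formula holds for all x ∈ A, y ∈ B.
  have hD : ∀ x ∈ A, ∀ y ∈ B,
      dC x y = (A ∩ B).inf' hne (fun z => min ((n + 1) / 2) (dA x z + dB z y)) ∧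
      dC y x = (A ∩ B).inf' hne (fun z => min ((n + 1) / 2) (dA x z + dB z y)) := by
    intro x hx y hy
    by_cases hyA : y ∈ A
    · have key : dA x y = (A ∩ B).inf' hne (fun z => min ((n + 1) / 2) (dA x z + dB z y)) := by
        apply le_antisymm
        · apply Finset.le_inf'
          intro z hz
          obtain ⟨hzA, hzB⟩ := Finset.mem_inter.mp hz
          refine le_min (hAbd x hx y hyA) ?_
          have h1 : dA x y ≤ dA x z + dA z y := hAtri x hx z hzA y hyA
          have h2 : dA z y = dB z y := hagree' z hzA hzB y hyA hy
          omega
        · have hmem : y ∈ A ∩ B := Finset.mem_inter.mpr ⟨hyA, hy⟩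
          have h1 := Finset.inf'_le (fun z => min ((n + 1) / 2) (dA x z + dB z y)) hmem
          have h0 : dB y y = 0 := hBzero y hy
          have h2 : dA x y ≤ (n + 1) / 2 := hAbd x hx y hyA
          have h3 : min ((n + 1) / 2) (dA x y + dB y y) = dA x y := by
            rw [h0]; omega
          calc (A ∩ B).inf' hne (fun z => min ((n + 1) / 2) (dA x z + dB z y))
              ≤ min ((n + 1) / 2) (dA x y + dB y y) := h1
            _ = dA x y := h3
      refine ⟨?_, ?_⟩
      · rw [hCA x hx y hyA]; exact key
      · rw [hCA y hyA x hx, hAsymm y hyA x hx]; exact key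
    · by_cases hxB : x ∈ B
      · have key : dB x y = (A ∩ B).inf' hne (fun z => min ((n + 1) / 2) (dA x z + dB z y)) := by
          apply le_antisymm
          · apply Finset.le_inf'
            intro z hz
            obtain ⟨hzA, hzB⟩ := Finset.mem_inter.mp hz
            refine le_min (hBbd x hxB y hy) ?_
            have h1 : dB x y ≤ dB x z + dB z y := hBtri x hxB z hzB y hy
            have h2 : dA x z = dB x z := hagree' x hx hxB z hzA hzB
            omega
          · have hmem : x ∈ A ∩ B := Finset.mem_inter.mpr ⟨hx, hxB⟩
            have h1 := Finset.inf'_le (fun z => min ((n + 1) / 2) (dA x z + dB z y)) hmem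
            have h0 : dA x x = 0 := hAzero x hx
            have h2 : dB x y ≤ (n + 1) / 2 := hBbd x hxB y hy
            have h3 : min ((n + 1) / 2) (dA x x + dB x y) = dB x y := by
              rw [h0]; omega
            calc (A ∩ B).inf' hne (fun z => min ((n + 1) / 2) (dA x z + dB z y))
                ≤ min ((n + 1) / 2) (dA x x + dB x y) := h1
              _ = dB x y := h3
        refine ⟨?_, ?_⟩
        · rw [hCB x hxB y hy]; exact key
        · rw [hCB y hy x hxB, hBsymm y hy x hxB]; exact key
      · exact hCross x hx hxB y hy hyA
  -- symmetry
  have hsymmC : ∀ x y, dC x y = dC y x := by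
    intro x y
    rcases hcover x with hx | hx <;> rcases hcover y with hy | hy
    · rw [hCA x hx y hy, hCA y hy x hx, hAsymm x hx y hy]
    · exact (hD x hx y hy).1.trans (hD x hx y hy).2.symm
    · exact (hD y hy x hx).2.trans (hD y hy x hx).1.symm
    · rw [hCB x hx y hy, hCB y hy x hx, hBsymm x hx y hy]
  -- bound
  have hbd : ∀ x y, dC x y ≤ (n + 1) / 2 := by
    intro x y
    obtain ⟨z0, hz0⟩ := hne
    rcases hcover x with hx | hx <;> rcases hcover y with hy | hy
    · rw [hCA x hx y hy]; exact hAbd x hx y hy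
    · rw [(hD x hx y hy).1]
      exact le_trans (Finset.inf'_le _ hz0) (min_le_left _ _)
    · rw [(hD y hy x hx).2]
      exact le_trans (Finset.inf'_le _ hz0) (min_le_left _ _)
    · rw [hCB x hx y hy]; exact hBbd x hx y hy
  -- zero iff
  have hzeroC : ∀ x y, dC x y = 0 ↔ x = y := by
    intro x y
    constructor
    · intro h
      rcases hcover x with hx | hx <;> rcases hcover y with hy | hy
      · rw [hCA x hx y hy] at h; exact (hAzeroIff x hx y hy).mp h
      · by_cases hyA : y ∈ A
        · rw [hCA x hx y hyA] at h; exact (hAzeroIff x hx y hyA).mp h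
        · exfalso
          rw [(hD x hx y hy).1] at h
          obtain ⟨w, hw, e⟩ := Finset.exists_mem_eq_inf' hne
            (fun z => min ((n + 1) / 2) (dA x z + dB z y))
          obtain ⟨hwA, hwB⟩ := Finset.mem_inter.mp hw
          have hm : min ((n + 1) / 2) (dA x w + dB w y) = 0 := e.symm.trans h
          have hsum : dA x w + dB w y = 0 := by omega
          have h2 : w = y := (hBzeroIff w hwB y hy).mp (by omega)
          exact hyA (h2 ▸ hwA)
      · by_cases hxA : x ∈ A
        · rw [hCA x hxA y hy] at h; exact (hAzeroIff x hxA y hy).mp h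
        · exfalso
          rw [(hD y hy x hx).2] at h
          obtain ⟨w, hw, e⟩ := Finset.exists_mem_eq_inf' hne
            (fun z => min ((n + 1) / 2) (dA y z + dB z x))
          obtain ⟨hwA, hwB⟩ := Finset.mem_inter.mp hw
          have hm : min ((n + 1) / 2) (dA y w + dB w x) = 0 := e.symm.trans h
          have hsum : dA y w + dB w x = 0 := by omega
          have h2 : w = x := (hBzeroIff w hwB x hx).mp (by omega)
          exact hxA (h2 ▸ hwA)
      · rw [hCB x hx y hy] at h; exact (hBzeroIff x hx y hy).mp h
    · rintro rfl
      rcases hcover x with hx | hx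
      · rw [hCA x hx x hx]; exact hAzero x hx
      · rw [hCB x hx x hx]; exact hBzero x hx
  -- triangle inequality, both endpoints in A
  have hTriA : ∀ x ∈ A, ∀ z ∈ A, ∀ y, dC x z ≤ dC x y + dC y z := by
    intro x hx z hz y
    by_cases hyA : y ∈ A
    · rw [hCA x hx z hz, hCA x hx y hyA, hCA y hyA z hz]
      exact hAtri x hx y hyA z hz
    · have hyB : y ∈ B := (hcover y).resolve_left hyA
      rw [hCA x hx z hz, (hD x hx y hyB).1, (hD z hz y hyB).2]
      obtain ⟨w1, hw1, e1⟩ := Finset.exists_mem_eq_inf' hne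
        (fun z' => min ((n + 1) / 2) (dA x z' + dB z' y))
      obtain ⟨w2, hw2, e2⟩ := Finset.exists_mem_eq_inf' hne
        (fun z' => min ((n + 1) / 2) (dA z z' + dB z' y))
      obtain ⟨hw1A, hw1B⟩ := Finset.mem_inter.mp hw1
      obtain ⟨hw2A, hw2B⟩ := Finset.mem_inter.mp hw2
      have hb : dA x z ≤ (n + 1) / 2 := hAbd x hx z hz
      have t1 : dA x z ≤ dA x w1 + dA w1 z := hAtri x hx w1 hw1A z hz
      have t1' : dA w1 z ≤ dA w1 w2 + dA w2 z := hAtri w1 hw1A w2 hw2A z hz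
      have t2 : dA w1 w2 ≤ dB w1 y + dB y w2 := by
        rw [hagree' w1 hw1A hw1B w2 hw2A hw2B]
        exact hBtri w1 hw1B y hyB w2 hw2B
      have s1 : dB y w2 = dB w2 y := hBsymm y hyB w2 hw2B
      have s2 : dA w2 z = dA z w2 := hAsymm w2 hw2A z hz
      have key : dA x z ≤ min ((n + 1) / 2) (dA x w1 + dB w1 y)
          + min ((n + 1) / 2) (dA z w2 + dB w2 y) := by
        rcases min_cases ((n + 1) / 2) (dA x w1 + dB w1 y) with ⟨m1, _⟩ | ⟨m1, _⟩ <;>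
          rcases min_cases ((n + 1) / 2) (dA z w2 + dB w2 y) with ⟨m2, _⟩ | ⟨m2, _⟩ <;> omega
      rw [e1, e2]
      exact key
  -- triangle inequality, both endpoints in B
  have hTriB : ∀ x ∈ B, ∀ z ∈ B, ∀ y, dC x z ≤ dC x y + dC y z := by
    intro x hx z hz y
    by_cases hyB : y ∈ B
    · rw [hCB x hx z hz, hCB x hx y hyB, hCB y hyB z hz]
      exact hBtri x hx y hyB z hz
    · have hyA : y ∈ A := (hcover y).resolve_right hyB
      rw [hCB x hx z hz, (hD y hyA x hx).2, (hD y hyA z hz).1]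
      obtain ⟨w1, hw1, e1⟩ := Finset.exists_mem_eq_inf' hne
        (fun z' => min ((n + 1) / 2) (dA y z' + dB z' x))
      obtain ⟨w2, hw2, e2⟩ := Finset.exists_mem_eq_inf' hne
        (fun z' => min ((n + 1) / 2) (dA y z' + dB z' z))
      obtain ⟨hw1A, hw1B⟩ := Finset.mem_inter.mp hw1
      obtain ⟨hw2A, hw2B⟩ := Finset.mem_inter.mp hw2
      have hb : dB x z ≤ (n + 1) / 2 := hBbd x hx z hz
      have t1 : dB x z ≤ dB x w1 + dB w1 z := hBtri x hx w1 hw1B z hz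
      have t1' : dB w1 z ≤ dB w1 w2 + dB w2 z := hBtri w1 hw1B w2 hw2B z hz
      have t2 : dB w1 w2 ≤ dA w1 y + dA y w2 := by
        rw [← hagree' w1 hw1A hw1B w2 hw2A hw2B]
        exact hAtri w1 hw1A y hyA w2 hw2A
      have s1 : dA w1 y = dA y w1 := hAsymm w1 hw1A y hyA
      have s2 : dB x w1 = dB w1 x := hBsymm x hx w1 hw1B
      have key : dB x z ≤ min ((n + 1) / 2) (dA y w1 + dB w1 x)
          + min ((n + 1) / 2) (dA y w2 + dB w2 z) := by
        rcases min_cases ((n + 1) / 2) (dA y w1 + dB w1 x) with ⟨m1, _⟩ | ⟨m1, _⟩ <;>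
          rcases min_cases ((n + 1) / 2) (dA y w2 + dB w2 z) with ⟨m2, _⟩ | ⟨m2, _⟩ <;> omega
      rw [e1, e2]
      exact key
  -- triangle inequality, cross case
  have hTriCross : ∀ x ∈ A, ∀ z ∈ B, ∀ y, dC x z ≤ dC x y + dC y z := by
    intro x hx z hz y
    by_cases hzA : z ∈ A
    · exact hTriA x hx z hzA y
    by_cases hxB : x ∈ B
    · exact hTriB x hxB z hz y
    rw [(hD x hx z hz).1]
    by_cases hyA : y ∈ A
    · rw [hCA x hx y hyA, (hD y hyA z hz).1]
      obtain ⟨w, hw, e⟩ := Finset.exists_mem_eq_inf' hne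
        (fun z' => min ((n + 1) / 2) (dA y z' + dB z' z))
      obtain ⟨hwA, hwB⟩ := Finset.mem_inter.mp hw
      have h0 : (A ∩ B).inf' hne (fun z' => min ((n + 1) / 2) (dA x z' + dB z' z))
          ≤ min ((n + 1) / 2) (dA x w + dB w z) := Finset.inf'_le _ hw
      have h1 : dA x w ≤ dA x y + dA y w := hAtri x hx y hyA w hwA
      have key : (A ∩ B).inf' hne (fun z' => min ((n + 1) / 2) (dA x z' + dB z' z))
          ≤ dA x y + min ((n + 1) / 2) (dA y w + dB w z) := by
        rcases min_cases ((n + 1) / 2) (dA x w + dB w z) with ⟨m1, _⟩ | ⟨m1, _⟩ <;>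
          rcases min_cases ((n + 1) / 2) (dA y w + dB w z) with ⟨m2, _⟩ | ⟨m2, _⟩ <;> omega
      rw [e]
      exact key
    · have hyB : y ∈ B := (hcover y).resolve_left hyA
      rw [hCB y hyB z hz, (hD x hx y hyB).1]
      obtain ⟨w, hw, e⟩ := Finset.exists_mem_eq_inf' hne
        (fun z' => min ((n + 1) / 2) (dA x z' + dB z' y))
      obtain ⟨hwA, hwB⟩ := Finset.mem_inter.mp hw
      have h0 : (A ∩ B).inf' hne (fun z' => min ((n + 1) / 2) (dA x z' + dB z' z))
          ≤ min ((n + 1) / 2) (dA x w + dB w z) := Finset.inf'_le _ hw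
      have h1 : dB w z ≤ dB w y + dB y z := hBtri w hwB y hyB z hz
      have key : (A ∩ B).inf' hne (fun z' => min ((n + 1) / 2) (dA x z' + dB z' z))
          ≤ min ((n + 1) / 2) (dA x w + dB w y) + dB y z := by
        rcases min_cases ((n + 1) / 2) (dA x w + dB w z) with ⟨m1, _⟩ | ⟨m1, _⟩ <;>
          rcases min_cases ((n + 1) / 2) (dA x w + dB w y) with ⟨m2, _⟩ | ⟨m2, _⟩ <;> omega
      rw [e]
      exact key
  -- full triangle inequality
  have htri : ∀ x y z, dC x z ≤ dC x y + dC y z := by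
    intro x y z
    rcases hcover x with hx | hx <;> rcases hcover z with hz | hz
    · exact hTriA x hx z hz y
    · exact hTriCross x hx z hz y
    · have h := hTriCross z hz x hx y
      rw [hsymmC z x, hsymmC z y, hsymmC y x] at h
      omega
    · exact hTriB x hx z hz y
  -- odd triangle case: two points in A, one in B \ A
  have caseII : ∀ a ∈ A, ∀ b ∈ A, ∀ c ∈ B, c ∉ A →
      dC a b + dC b c + dC c a ≤ n → ¬ Odd (dC a b + dC b c + dC c a) := by
    intro a ha b hb c hc hcA hle hoddp
    obtain ⟨z2, hz2, e2⟩ := Finset.exists_mem_eq_inf' hne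
      (fun z => min ((n + 1) / 2) (dA b z + dB z c))
    obtain ⟨z1, hz1, e1⟩ := Finset.exists_mem_eq_inf' hne
      (fun z => min ((n + 1) / 2) (dA a z + dB z c))
    obtain ⟨hz1A, hz1B⟩ := Finset.mem_inter.mp hz1
    obtain ⟨hz2A, hz2B⟩ := Finset.mem_inter.mp hz2
    have hv : dC b c = min ((n + 1) / 2) (dA b z2 + dB z2 c) := ((hD b hb c hc).1).trans e2
    have hw : dC c a = min ((n + 1) / 2) (dA a z1 + dB z1 c) := ((hD a ha c hc).2).trans e1
    have hu : dC a b = dA a b := hCA a ha b hb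
    have htv := htri b a c
    have htw := htri c b a
    have s1 := hsymmC b a
    have s2 := hsymmC a c
    have s3 := hsymmC c b
    have hv' : dC b c = dA b z2 + dB z2 c := by
      rcases min_cases ((n + 1) / 2) (dA b z2 + dB z2 c) with ⟨m, hm⟩ | ⟨m, hm⟩ <;> omega
    have hw' : dC c a = dA a z1 + dB z1 c := by
      rcases min_cases ((n + 1) / 2) (dA a z1 + dB z1 c) with ⟨m, hm⟩ | ⟨m, hm⟩ <;> omega
    have hkey := parity_key n (A : Set γ) (B : Set γ) dA dB hAsymm hAzero hAtri
      hBsymm hBzero hBtri hAfree hBfree hagree' ha hb hc hz1A hz1B hz2A hz2B (by omega)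
    apply hkey
    rw [hu, hv', hw'] at hoddp
    exact hoddp
  -- odd triangle case: two points in B, one in A \ B
  have caseII' : ∀ a ∈ B, ∀ b ∈ B, ∀ c ∈ A, c ∉ B →
      dC a b + dC b c + dC c a ≤ n → ¬ Odd (dC a b + dC b c + dC c a) := by
    intro a ha b hb c hc hcB hle hoddp
    obtain ⟨z2, hz2, e2⟩ := Finset.exists_mem_eq_inf' hne
      (fun z => min ((n + 1) / 2) (dA c z + dB z b))
    obtain ⟨z1, hz1, e1⟩ := Finset.exists_mem_eq_inf' hne
      (fun z => min ((n + 1) / 2) (dA c z + dB z a))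
    obtain ⟨hz1A, hz1B⟩ := Finset.mem_inter.mp hz1
    obtain ⟨hz2A, hz2B⟩ := Finset.mem_inter.mp hz2
    have hv : dC b c = min ((n + 1) / 2) (dA c z2 + dB z2 b) := ((hD c hc b hb).2).trans e2
    have hw : dC c a = min ((n + 1) / 2) (dA c z1 + dB z1 a) := ((hD c hc a ha).1).trans e1
    have hu : dC a b = dB a b := hCB a ha b hb
    have htv := htri b a c
    have htw := htri c b a
    have s1 := hsymmC b a
    have s2 := hsymmC a c
    have s3 := hsymmC c b
    have hv' : dC b c = dA c z2 + dB z2 b := by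
      rcases min_cases ((n + 1) / 2) (dA c z2 + dB z2 b) with ⟨m, hm⟩ | ⟨m, hm⟩ <;> omega
    have hw' : dC c a = dA c z1 + dB z1 a := by
      rcases min_cases ((n + 1) / 2) (dA c z1 + dB z1 a) with ⟨m, hm⟩ | ⟨m, hm⟩ <;> omega
    have hagree'' : ∀ x ∈ (B : Set γ), x ∈ (A : Set γ) → ∀ y ∈ (B : Set γ), y ∈ (A : Set γ) →
        dB x y = dA x y := fun x hxB hxA y hyB hyA => (hagree' x hxA hxB y hyA hyB).symm
    have sb2 : dB b z2 = dB z2 b := hBsymm b hb z2 hz2B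
    have sa2 : dA z2 c = dA c z2 := hAsymm z2 hz2A c hc
    have sb1 : dB a z1 = dB z1 a := hBsymm a ha z1 hz1B
    have sa1 : dA z1 c = dA c z1 := hAsymm z1 hz1A c hc
    have hkey := parity_key n (B : Set γ) (A : Set γ) dB dA hBsymm hBzero hBtri
      hAsymm hAzero hAtri hBfree hAfree hagree'' ha hb hc hz1B hz1A hz2B hz2A (by omega)
    apply hkey
    rw [Nat.odd_iff] at hoddp ⊢
    omega
  -- full odd-triangle freeness
  have homit : OmitsOddTriangles n dC := by
    intro a b c hab hbc hac hle hoddp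
    by_cases haA : a ∈ A <;> by_cases hbA : b ∈ A <;> by_cases hcA : c ∈ A
    · rw [hCA a haA b hbA, hCA b hbA c hcA, hCA c hcA a haA] at hle hoddp
      exact hAfree a haA b hbA c hcA hab hbc hac hle hoddp
    · have hcB : c ∈ B := (hcover c).resolve_left hcA
      exact caseII a haA b hbA c hcB hcA hle hoddp
    · have hbB : b ∈ B := (hcover b).resolve_left hbA
      have hle' : dC c a + dC a b + dC b c ≤ n := by omega
      have hoddp' : Odd (dC c a + dC a b + dC b c) := by
        rw [Nat.odd_iff] at hoddp ⊢; omega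
      exact caseII c hcA a haA b hbB hbA hle' hoddp'
    · have hbB : b ∈ B := (hcover b).resolve_left hbA
      have hcB : c ∈ B := (hcover c).resolve_left hcA
      by_cases haB : a ∈ B
      · rw [hCB a haB b hbB, hCB b hbB c hcB, hCB c hcB a haB] at hle hoddp
        exact hBfree a haB b hbB c hcB hab hbc hac hle hoddp
      · have hle' : dC b c + dC c a + dC a b ≤ n := by omega
        have hoddp' : Odd (dC b c + dC c a + dC a b) := by
          rw [Nat.odd_iff] at hoddp ⊢; omega
        exact caseII' b hbB c hcB a haA haB hle' hoddp'
    · have haB : a ∈ B := (hcover a).resolve_left haA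
      have hle' : dC b c + dC c a + dC a b ≤ n := by omega
      have hoddp' : Odd (dC b c + dC c a + dC a b) := by
        rw [Nat.odd_iff] at hoddp ⊢; omega
      exact caseII b hbA c hcA a haB haA hle' hoddp'
    · have haB : a ∈ B := (hcover a).resolve_left haA
      have hcB : c ∈ B := (hcover c).resolve_left hcA
      by_cases hbB : b ∈ B
      · rw [hCB a haB b hbB, hCB b hbB c hcB, hCB c hcB a haB] at hle hoddp
        exact hBfree a haB b hbB c hcB hab hbc hac hle hoddp
      · have hbB' : b ∈ A := (hcover b).resolve_right hbB
        have hle' : dC c a + dC a b + dC b c ≤ n := by omega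
        have hoddp' : Odd (dC c a + dC a b + dC b c) := by
          rw [Nat.odd_iff] at hoddp ⊢; omega
        exact caseII' c hcB a haB b hbB' hbB hle' hoddp'
    · have haB : a ∈ B := (hcover a).resolve_left haA
      have hbB : b ∈ B := (hcover b).resolve_left hbA
      by_cases hcB : c ∈ B
      · rw [hCB a haB b hbB, hCB b hbB c hcB, hCB c hcB a haB] at hle hoddp
        exact hBfree a haB b hbB c hcB hab hbc hac hle hoddp
      · exact caseII' a haB b hbB c hcA hcB hle hoddp
    · have haB : a ∈ B := (hcover a).resolve_left haA
      have hbB : b ∈ B := (hcover b).resolve_left hbA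
      have hcB : c ∈ B := (hcover c).resolve_left hcA
      rw [hCB a haB b hbB, hCB b hbB c hcB, hCB c hcB a haB] at hle hoddp
      exact hBfree a haB b hbB c hcB hab hbc hac hle hoddp
  exact ⟨⟨hbd, hzeroC, hsymmC, htri⟩, homit⟩
end
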